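/- arXiv:1508.01829 — 2 statements merged into one kernel-verified Lean document; each statement's English description precedes it below -/
import Mathlib

section
/- Let m, g, K_cr, V, λ_V, λ_h and the values c, c_V, c_h, W, K_des, K_desV, K_desh, D̃, D̃_V, D̃_h, W_χ, W_χV be real numbers with m ≠ 0, V ≠ 0, D̃ ≠ 0, λ_V ≠ 0. Assume: (i) g + V·W_χ = (λ_h/λ_V)·V; (ii) λ_V/m = (−K_cr·(c·V + W) + K_des)/D̃; and (iii) K_cr·(−(c + c_V·V)·(λ_h/λ_V)·V + c_h·V² + V·W_χ) + K_desV·(λ_h/λ_V)·V − K_desh·V + (λ_V/m)·(D̃·(W_χ + W_χV) + D̃_h·V) − (λ_h/m)·(D̃_V·V + D̃) = 0. Then Γ_s = 0, where Γ_s := (K_cr·(c·V + W) − K_des)·(V·D̃_h − D̃_V·(g + V·W_χ) + D̃·W_χV) − D̃·K_cr·(c·g + (W/V)·g − (c + c_V·V)·(g + V·W_χ) + c_h·V² + V·W_χ) − D̃·(−(K_des/V)·g + K_desV·(g + V·W_χ) − K_desh·V). -/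
/-- Eq. (44): the singular arc equation `Γ_s(V, h) = 0` follows from the singular
condition `H_γ = 0` (Eq. 40), the vanishing-Hamiltonian relation (Eq. 42/43), and
`Ḣ_γ = 0` (Eq. 41). -/
theorem singular_arc_equation
    (m g Kcr V lamV lamh c cV ch W Kdes KdesV Kdesh Dt DtV Dth Wchi WchiV : ℝ)
    (hm : m ≠ 0) (hV : V ≠ 0) (hD : Dt ≠ 0) (hlV : lamV ≠ 0)
    (h1 : g + V * Wchi = (lamh / lamV) * V)
    (h2 : lamV / m = (-Kcr * (c * V + W) + Kdes) / Dt)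
    (h3 : Kcr * (-(c + cV * V) * (lamh / lamV) * V + ch * V ^ 2 + V * Wchi)
          + KdesV * (lamh / lamV) * V - Kdesh * V
          + (lamV / m) * (Dt * (Wchi + WchiV) + Dth * V)
          - (lamh / m) * (DtV * V + Dt) = 0) :
    (Kcr * (c * V + W) - Kdes) * (V * Dth - DtV * (g + V * Wchi) + Dt * WchiV)
      - Dt * (Kcr * (c * g + (W / V) * g - (c + cV * V) * (g + V * Wchi)
              + ch * V ^ 2 + V * Wchi))
      - Dt * (-(Kdes / V) * g + KdesV * (g + V * Wchi) - Kdesh * V) = 0 := by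
  have hA : lamh / lamV = (g + V * Wchi) / V := by
    rw [h1]; field_simp
  have hrA : lamh / m = (lamV / m) * (lamh / lamV) := by
    field_simp
  rw [hrA, hA, h2] at h3
  field_simp at h3
  have h4 : ((Kcr * ((-(cV * V) + -c) * (g + V * Wchi) + ch * V ^ 2 + V * Wchi)
        + KdesV * (g + V * Wchi) - Kdesh * V) * Dt
        + (-(Kcr * (c * V + W)) + Kdes) * (Dt * (Wchi + WchiV) + Dth * V)) * V
      - (-(Kcr * (c * V + W)) + Kdes) * (g + V * Wchi) * (DtV * V + Dt) = 0 := by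
    apply mul_left_cancel₀ hD
    linear_combination Dt * h3
  field_simp
  linear_combination -h4
end

section
/- Let S : ℝ × ℝ → ℝ be differentiable at (V₀, h₀) with partial derivatives S_V and S_h there, let m ≠ 0, g, D̃, W_χ, γ be reals, and let V, h : ℝ → ℝ be differentiable at t₁ with V(t₁) = V₀, h(t₁) = h₀, V'(t₁) = −D̃/m − (g + V₀·W_χ)·γ, and h'(t₁) = V₀·γ. Suppose the function t ↦ S(V(t), h(t)) has derivative 0 at t₁, and suppose S_V·(g + V₀·W_χ) − S_h·V₀ ≠ 0. Then γ = −(S_V·(g + V₀·W_χ) − S_h·V₀)⁻¹ · S_V · (D̃/m). -/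
/-- Eq. (47): the boundary-arc feedback control law. Along an active first-order pure
state constraint `S(V, h) = 0`, the vanishing of `Ṡ` determines the flight path angle
`γ = −[S_V·(g + V·W_χ) − S_h·V]⁻¹ · S_V · D̃/m`. -/
theorem boundary_arc_control
    (S : ℝ × ℝ → ℝ) (L : ℝ × ℝ →L[ℝ] ℝ) (V₀ h₀ : ℝ)
    (hS : HasFDerivAt S L (V₀, h₀))
    (m g Dt Wchi γ : ℝ) (hm : m ≠ 0)
    (V h : ℝ → ℝ) (t₁ : ℝ)
    (hV0 : V t₁ = V₀) (hh0 : h t₁ = h₀)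
    (hV : HasDerivAt V (-Dt / m - (g + V₀ * Wchi) * γ) t₁)
    (hh : HasDerivAt h (V₀ * γ) t₁)
    (hSdot : HasDerivAt (fun t => S (V t, h t)) 0 t₁)
    (hne : L (1, 0) * (g + V₀ * Wchi) - L (0, 1) * V₀ ≠ 0) :
    γ = -(L (1, 0) * (g + V₀ * Wchi) - L (0, 1) * V₀)⁻¹ * L (1, 0) * (Dt / m) := by
  have hVh : HasDerivAt (fun t => (V t, h t))
      (-Dt / m - (g + V₀ * Wchi) * γ, V₀ * γ) t₁ := hV.prodMk hh
  have hS' : HasFDerivAt S L (V t₁, h t₁) := by rw [hV0, hh0]; exact hS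
  have hcomp : HasDerivAt (fun t => S (V t, h t))
      (L (-Dt / m - (g + V₀ * Wchi) * γ, V₀ * γ)) t₁ :=
    hS'.comp_hasDerivAt t₁ hVh
  have h0 : L (-Dt / m - (g + V₀ * Wchi) * γ, V₀ * γ) = 0 :=
    hcomp.unique hSdot
  have hdecomp : (-Dt / m - (g + V₀ * Wchi) * γ, V₀ * γ)
      = (-Dt / m - (g + V₀ * Wchi) * γ) • ((1 : ℝ), (0 : ℝ))
        + (V₀ * γ) • ((0 : ℝ), (1 : ℝ)) := by
    simp [Prod.ext_iff]
  rw [hdecomp, map_add, map_smul, map_smul] at h0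
  simp only [smul_eq_mul] at h0
  field_simp at h0 ⊢
  have hne' : (g + V₀ * Wchi) * L (1, 0) - V₀ * L (0, 1) ≠ 0 := by
    intro hc; apply hne; linarith
  rw [eq_neg_iff_add_eq_zero, ← mul_div_cancel_right₀ (m * γ) hne', ← add_div, div_eq_zero_iff]
  left; linear_combination -h0
end
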